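/- Let s ≥ 2, p = ⌊√s⌋, q = ⌊s/4⌋, d_s = s² − sp − q, and let W² = Z² ∩ [1, ⌊√(d_s)⌋]² be the square Wulff shape with ⌊√(d_s)⌋² points. Then for every translation vector a ∈ Z², the symmetric difference of R_{s,p,q} and a + W² has cardinality at least (1/2)·⌊√s⌋·(s − ⌊√s⌋ − 1). -/

import Mathlib

open Finset Filter

/-- Adjacency in `ℤ²`: Euclidean distance one. -/
def adj2 (x y : ℤ × ℤ) : Prop :=
  (x.1 - y.1) ^ 2 + (x.2 - y.2) ^ 2 = 1

/-- Cardinality of the edge boundary `Θ₂(E)` in `ℤ²` (ordered pairs). -/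
noncomputable def theta2 (E : Finset (ℤ × ℤ)) : ℕ :=
  Set.ncard {p : (ℤ × ℤ) × (ℤ × ℤ) | adj2 p.1 p.2 ∧ p.1 ∈ E ∧ p.2 ∉ E}

/-- Number of ordered bonded pairs of `E ⊂ ℤ²`; this equals `2 b(E)`. -/
noncomputable def bondPairs2 (E : Finset (ℤ × ℤ)) : ℕ :=
  Set.ncard {p : (ℤ × ℤ) × (ℤ × ℤ) | adj2 p.1 p.2 ∧ p.1 ∈ E ∧ p.2 ∈ E}

/-- Number of unit bonds `b(E) = ½·#{(x,y) ∈ E×E : |x−y|=1}`. -/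
noncomputable def bonds2 (E : Finset (ℤ × ℤ)) : ℕ := bondPairs2 E / 2

/-- The configuration `R_{s,p,q} ⊂ ℤ²`: the lattice points of the rectangle
`[1, s−p−1] × [1, s]` together with the column `{s−p} × [1, s−q]`. -/
noncomputable def Rspq (s p q : ℕ) : Finset (ℤ × ℤ) :=
  (Icc (1 : ℤ) ((s : ℤ) - p - 1) ×ˢ Icc (1 : ℤ) (s : ℤ)) ∪
    ({(s : ℤ) - p} ×ˢ Icc (1 : ℤ) ((s : ℤ) - q))

/-- The square Wulff shape `W² = ℤ² ∩ [1, k]²`. -/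
noncomputable def wulff2 (k : ℕ) : Finset (ℤ × ℤ) := Icc (1 : ℤ) (k : ℤ) ×ˢ Icc (1 : ℤ) (k : ℤ)

/-- Translation of a finite subset of `ℤ²` by `a`. -/
def translate2 (a : ℤ × ℤ) (F : Finset (ℤ × ℤ)) : Finset (ℤ × ℤ) :=
  F.image fun x => (a.1 + x.1, a.2 + x.2)

/-- for `s ≥ 2`, `p = ⌊√s⌋`, `q = ⌊s/4⌋`, `d_s = s² − sp − q`,
and the square Wulff shape `W² = ℤ² ∩ [1, ⌊√(d_s)⌋]²`, every translate of `W²`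
differs from `R_{s,p,q}` by at least `½·⌊√s⌋·(s − ⌊√s⌋ − 1)` points. -/
lemma translate2_wulff2 (a : ℤ × ℤ) (k : ℕ) :
    translate2 a (wulff2 k) =
      Icc (a.1 + 1) (a.1 + (k : ℤ)) ×ˢ Icc (a.2 + 1) (a.2 + (k : ℤ)) := by
  ext ⟨x, y⟩
  simp only [translate2, wulff2, mem_image, mem_product, mem_Icc, Prod.ext_iff, Prod.exists]
  constructor
  · rintro ⟨u, v, ⟨⟨h1, h2⟩, h3, h4⟩, h5, h6⟩
    omega
  · rintro ⟨⟨h1, h2⟩, h3, h4⟩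
    exact ⟨x - a.1, y - a.2, ⟨⟨by omega, by omega⟩, by omega, by omega⟩, by omega, by omega⟩

theorem Rspq_symmDiff_lower_bound (s : ℕ) (hs : 2 ≤ s) (a : ℤ × ℤ) :
    (Nat.sqrt s : ℚ) * ((s : ℚ) - Nat.sqrt s - 1) / 2 ≤
      (((Rspq s (Nat.sqrt s) (s / 4) \
            translate2 a (wulff2 (Nat.sqrt (s ^ 2 - s * Nat.sqrt s - s / 4)))) ∪
          (translate2 a (wulff2 (Nat.sqrt (s ^ 2 - s * Nat.sqrt s - s / 4))) \
            Rspq s (Nat.sqrt s) (s / 4))).card : ℚ) := by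
  set p := Nat.sqrt s with hp
  set q := s / 4 with hq
  set k := Nat.sqrt (s ^ 2 - s * p - q) with hk
  have hp1 : p + 1 ≤ s := Nat.sqrt_lt_self (by omega)
  have hps : p ≤ s := by omega
  -- key arithmetic: p + 2k ≤ 2s
  have hsp : s * p ≤ s ^ 2 := by nlinarith
  have hk2 : k ^ 2 ≤ s ^ 2 - s * p := le_trans (Nat.sqrt_le' _) (by omega)
  have hk2' : (k : ℤ) ^ 2 ≤ (s : ℤ) ^ 2 - s * p := by
    have := hk2
    zify [hsp] at this
    exact this
  have hkey : p + 2 * k ≤ 2 * s := by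
    zify
    nlinarith [hk2', sq_nonneg ((p : ℤ) - 1), sq_nonneg ((2 : ℤ) * s - p - 2 * k),
      sq_nonneg ((p : ℤ) + 2 * k - 2 * s)]
  set m := s - p - 1 with hm
  set W' := Icc (a.1 + 1) (a.1 + (k : ℤ)) ×ˢ Icc (a.2 + 1) (a.2 + (k : ℤ)) with hW
  set rect := Icc (1 : ℤ) ((s : ℤ) - p - 1) ×ˢ Icc (1 : ℤ) (s : ℤ) with hrectdef
  have htr : translate2 a (wulff2 k) = W' := translate2_wulff2 a k
  rw [htr]
  set D := (Rspq s p q \ W') ∪ (W' \ Rspq s p q) with hD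
  have hsub : rect \ W' ⊆ D :=
    (sdiff_subset_sdiff subset_union_left (Finset.Subset.refl _)).trans subset_union_left
  have e1 : (Icc (1 : ℤ) ((s : ℤ) - p - 1)).card = m := by
    rw [Int.card_Icc]; omega
  have e2 : (Icc (1 : ℤ) (s : ℤ)).card = s := by rw [Int.card_Icc]; omega
  have e3 : (Icc (a.2 + 1) (a.2 + (k : ℤ))).card = k := by rw [Int.card_Icc]; omega
  have hrect : rect.card = m * s := by rw [hrectdef, Finset.card_product, e1, e2]
  have hIcard : (rect ∩ W').card ≤ m * k := by
    rw [hrectdef, hW, Finset.product_inter_product, Finset.card_product]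
    exact Nat.mul_le_mul (le_trans (card_le_card inter_subset_left) e1.le)
      (le_trans (card_le_card inter_subset_right) e3.le)
  have hsum : (rect \ W').card + (rect ∩ W').card = rect.card :=
    card_sdiff_add_card_inter rect W'
  have hDcard : (rect \ W').card ≤ D.card := card_le_card hsub
  -- move to ℚ
  have hmz : (m : ℤ) = (s : ℤ) - p - 1 := by omega
  have hmq : (m : ℚ) = (s : ℚ) - p - 1 := by
    have := hmz; qify at this; exact_mod_cast this
  have q1 : ((rect \ W').card : ℚ) + ((rect ∩ W').card : ℚ) = (m : ℚ) * s := by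
    exact_mod_cast congrArg (Nat.cast : ℕ → ℚ) (hsum.trans hrect)
  have q2 : ((rect ∩ W').card : ℚ) ≤ (m : ℚ) * k := by exact_mod_cast hIcard
  have q3 : ((rect \ W').card : ℚ) ≤ (D.card : ℚ) := by exact_mod_cast hDcard
  have q4 : (p : ℚ) + 2 * k ≤ 2 * s := by exact_mod_cast hkey
  have hm0 : (0 : ℚ) ≤ (m : ℚ) := by positivity
  rw [← hmq]
  nlinarith [mul_nonneg hm0 (by linarith : (0 : ℚ) ≤ 2 * (s : ℚ) - p - 2 * k)]
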